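/- In any multipartite tournament, there exists either a 1-Duke, or three distinct 2-Dukes, or four distinct 3-Dukes. -/
import Mathlib


/-- An orientation of a complete multipartite graph: vertices `V`, partite sets
given as fibers of `part : V → ι`, and `peck` the arc relation. Between any two
vertices in different partite sets there is exactly one arc, and there are no
arcs within a partite set. -/
structure MTour (V : Type*) (ι : Type*) where
  part : V → ι
  peck : V → V → Prop
  complete : ∀ u v, part u ≠ part v → peck u v ∨ peck v u
  inter : ∀ u v, peck u v → part u ≠ part v
  asymm : ∀ u v, peck u v → ¬ peck v u

namespace MTour

variable {V ι : Type*}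

/-- There is a directed path of length at most `m` from `d` to `c`. -/
def hasPath (T : MTour V ι) (m : ℕ) (d c : V) : Prop :=
  ∃ k ≤ m, ∃ f : ℕ → V, f 0 = d ∧ f k = c ∧ ∀ i < k, T.peck (f i) (f (i + 1))

/-- `d` is an `m`-Duke: every vertex in a different partite set is reachable
from `d` by a directed path of length at most `m`. -/
def isDuke (T : MTour V ι) (m : ℕ) (d : V) : Prop :=
  ∀ c, T.part c ≠ T.part d → T.hasPath m d c

/-- `d` is an `m`-King: every other vertex is reachable from `d` by a directed
path of length at most `m`. -/
def isKing (T : MTour V ι) (m : ℕ) (d : V) : Prop :=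
  ∀ c, c ≠ d → T.hasPath m d c

/-- The out-degree of a vertex. -/
noncomputable def outDeg (T : MTour V ι) (v : V) : ℕ :=
  Nat.card {w // T.peck v w}

/-- `e` eclipses `d`: same partite set, `e` pecks everything `d` pecks, and
at least one vertex `d` does not peck. -/
def eclipses (T : MTour V ι) (e d : V) : Prop :=
  T.part e = T.part d ∧ (∀ c, T.peck d c → T.peck e c) ∧ ∃ c, T.peck e c ∧ ¬ T.peck d c

/-- `d` is non-eclipsed: no vertex of its partite set eclipses it. -/
def nonEclipsed (T : MTour V ι) (d : V) : Prop :=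
  ∀ e, ¬ T.eclipses e d

/-- Partite set `i` dominates partite set `j`: some vertex of `i` pecks all of `j`. -/
def Dominates (T : MTour V ι) (i j : ι) : Prop :=
  ∃ v, T.part v = i ∧ ∀ w, T.part w = j → T.peck v w

end MTour


namespace MTour

variable {V ι : Type*}

/-- out-neighbourhood as a set -/
def Nout (T : MTour V ι) (v : V) : Set V := {w | T.peck v w}

/-- vertices reachable in one or two steps -/
def Mset (T : MTour V ι) (v : V) : Set V :=
  {w | T.peck v w ∨ ∃ u, T.peck v u ∧ T.peck u w}

/-- linearized rank -/
noncomputable def phi (T : MTour V ι) (v : V) : ℕ :=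
  (Nat.card V + 1) * (T.Mset v).ncard + (T.Nout v).ncard

variable (T : MTour V ι)

lemma peck_irrefl (v : V) : ¬ T.peck v v := fun h => (T.inter v v h) rfl

lemma path1 {d c : V} (h : T.peck d c) {m : ℕ} (hm : 1 ≤ m) : T.hasPath m d c := by
  refine ⟨1, hm, fun n => if n = 0 then d else c, by simp, by simp, ?_⟩
  intro i hi
  interval_cases i
  simpa using h

lemma path2 {d a c : V} (h1 : T.peck d a) (h2 : T.peck a c) {m : ℕ} (hm : 2 ≤ m) :
    T.hasPath m d c := by
  refine ⟨2, hm, fun n => if n = 0 then d else if n = 1 then a else c,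
    by simp, by simp, ?_⟩
  intro i hi
  interval_cases i
  · simpa using h1
  · simpa using h2

lemma path3 {d a b c : V} (h1 : T.peck d a) (h2 : T.peck a b) (h3 : T.peck b c) :
    T.hasPath 3 d c := by
  refine ⟨3, le_refl 3, fun n => if n = 0 then d else if n = 1 then a else if n = 2 then b else c,
    by simp, by simp, ?_⟩
  intro i hi
  interval_cases i
  · simpa using h1
  · simpa using h2
  · simpa using h3

lemma mem_Mset_of_peck {v w : V} (h : T.peck v w) : w ∈ T.Mset v := Or.inl h

lemma self_not_mem_Mset (v : V) : v ∉ T.Mset v := by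
  rintro (h | ⟨u, h1, h2⟩)
  · exact T.peck_irrefl v h
  · exact T.asymm u v h2 h1

lemma Nout_ncard_le (v : V) [Finite V] : (T.Nout v).ncard ≤ Nat.card V := by
  rw [← Set.ncard_univ]
  exact Set.ncard_le_ncard (Set.subset_univ _) Set.finite_univ

/-- If `Mset d ∪ {d} ⊆ Mset c` then `phi c > phi d`. -/
lemma phi_lt [Finite V] {d c : V} (hsub : T.Mset d ⊆ T.Mset c) (hd : d ∈ T.Mset c) :
    T.phi d < T.phi c := by
  have hstrict : T.Mset d ⊂ T.Mset c := ⟨hsub, fun h => T.self_not_mem_Mset d (h hd)⟩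
  have h1 : (T.Mset d).ncard < (T.Mset c).ncard :=
    Set.ncard_lt_ncard hstrict (Set.toFinite _)
  have h2 : (T.Nout d).ncard ≤ Nat.card V := T.Nout_ncard_le d
  unfold phi
  nlinarith [Nat.zero_le ((T.Nout c).ncard)]

/-- key structural lemma: a `phi`-maximal common in-neighbour of a set of
non-eclipsed vertices is a 3-duke. -/
lemma keyduke [Finite V] (S : Set V) (hS : ∀ w ∈ S, T.nonEclipsed w) (d : V)
    (hdA : ∀ w ∈ S, T.peck d w)
    (hmax : ∀ u, (∀ w ∈ S, T.peck u w) → T.phi u ≤ T.phi d) :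
    T.isDuke 3 d := by
  intro c hc
  by_contra hnp
  -- failure facts
  have np1 : ¬ T.peck d c := fun h => hnp (T.path1 h (by norm_num))
  have np2 : ∀ u, T.peck d u → ¬ T.peck u c := by
    intro u h1 h2
    exact hnp (T.path2 h1 h2 (by norm_num))
  have np3 : ∀ u y, T.peck d u → T.peck u y → ¬ T.peck y c := by
    intro u y h1 h2 h3
    exact hnp (T.path3 h1 h2 h3)
  have hcd : T.peck c d := by
    rcases T.complete c d hc with h | h
    · exact h
    · exact absurd h np1
  have step2 : ∀ u, T.peck d u → T.part u ≠ T.part c → T.peck c u := by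
    intro u h1 h2
    rcases T.complete u c h2 with h | h
    · exact absurd h (np2 u h1)
    · exact h
  have bcase : ∀ b, T.peck d b → T.part b = T.part c → ∀ z, T.peck b z → T.peck c z := by
    intro b h1 h2 z h3
    have hz : T.part z ≠ T.part c := by
      have := T.inter b z h3
      rw [h2] at this
      exact fun h => this h.symm
    rcases T.complete z c hz with h | h
    · exact absurd h (np3 b z h1 h3)
    · exact h
  have hMsub : T.Mset d ⊆ T.Mset c := by
    rintro y (hy | ⟨u, h1, h2⟩)
    · exact Or.inr ⟨d, hcd, hy⟩
    · by_cases hu : T.part u = T.part c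
      · exact Or.inl (bcase u h1 hu y h2)
      · exact Or.inr ⟨u, step2 u h1 hu, h2⟩
  have hcA : ∀ w ∈ S, T.peck c w := by
    intro w hw
    by_cases hp : T.part w = T.part c
    · exact absurd ⟨hp.symm, bcase w (hdA w hw) hp, ⟨d, hcd, fun h => T.asymm d w (hdA w hw) h⟩⟩
        (hS w hw c)
    · exact step2 w (hdA w hw) hp
  exact absurd (hmax c hcA) (not_le.mpr (T.phi_lt hMsub (T.mem_Mset_of_peck hcd)))

/-- a `phi`-maximal common in-neighbour is non-eclipsed. -/
lemma key_noneclipsed [Finite V] (S : Set V) (d : V)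
    (hdA : ∀ w ∈ S, T.peck d w)
    (hmax : ∀ u, (∀ w ∈ S, T.peck u w) → T.phi u ≤ T.phi d) :
    T.nonEclipsed d := by
  intro e he
  obtain ⟨hpart, hsub, z, hez, hdz⟩ := he
  have heA : ∀ w ∈ S, T.peck e w := fun w hw => hsub w (hdA w hw)
  have hM : (T.Mset d).ncard ≤ (T.Mset e).ncard := by
    apply Set.ncard_le_ncard _ (Set.toFinite _)
    rintro y (hy | ⟨u, h1, h2⟩)
    · exact Or.inl (hsub y hy)
    · exact Or.inr ⟨u, hsub u h1, h2⟩
  have hN : (T.Nout d).ncard < (T.Nout e).ncard := by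
    apply Set.ncard_lt_ncard _ (Set.toFinite _)
    exact ⟨fun y hy => hsub y hy, fun h => hdz (h hez)⟩
  have : T.phi d < T.phi e := by
    unfold phi
    nlinarith [Nat.succ_le_of_lt (Nat.pos_of_ne_zero (fun h : Nat.card V + 1 = 0 => by omega))]
  exact absurd (hmax e heA) (not_le.mpr this)

/-- existence of a phi-maximal common in-neighbour -/
lemma exists_argmax [Finite V] (S : Set V) (hA : ∃ u, ∀ w ∈ S, T.peck u w) :
    ∃ d, (∀ w ∈ S, T.peck d w) ∧ ∀ u, (∀ w ∈ S, T.peck u w) → T.phi u ≤ T.phi d := by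
  obtain ⟨d, hd, hmax⟩ := Set.exists_max_image {u | ∀ w ∈ S, T.peck u w} T.phi
    (Set.toFinite _) hA
  exact ⟨d, hd, hmax⟩

/-- above any vertex there is a non-eclipsed vertex with larger out-neighbourhood,
in the same partite set. -/
lemma exists_hat [Finite V] (c : V) :
    ∃ e, T.part e = T.part c ∧ (∀ z, T.peck c z → T.peck e z) ∧ T.nonEclipsed e := by
  obtain ⟨e, ⟨hp, hs⟩, hmax⟩ := Set.exists_max_image
    {v | T.part v = T.part c ∧ ∀ z, T.peck c z → T.peck v z} (fun v => (T.Nout v).ncard)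
    (Set.toFinite _) ⟨c, rfl, fun _ h => h⟩
  refine ⟨e, hp, hs, ?_⟩
  intro e' he'
  obtain ⟨hpart, hsub, z, hez, hdz⟩ := he'
  have hmem : e' ∈ {v | T.part v = T.part c ∧ ∀ z, T.peck c z → T.peck v z} :=
    ⟨hpart.trans hp, fun z hz => hsub z (hs z hz)⟩
  have : (T.Nout e).ncard < (T.Nout e').ncard :=
    Set.ncard_lt_ncard ⟨fun y hy => hsub y hy, fun h => hdz (h hez)⟩ (Set.toFinite _)
  exact absurd (hmax e' hmem) (not_le.mpr this)



variable {V ι : Type*} (T : MTour V ι)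

lemma ne_of_peck {u v : V} (h : T.peck u v) : u ≠ v :=
  fun e => T.peck_irrefl v (e ▸ h)

lemma no_common [Finite V] {a b : V} (ha : T.nonEclipsed a) (hb : T.nonEclipsed b)
    (H : ∀ d, T.isDuke 3 d → T.peck d a → T.peck d b → False) :
    ∀ u, ¬ (T.peck u a ∧ T.peck u b) := by
  rintro u ⟨h1, h2⟩
  obtain ⟨d, hdA, hmax⟩ := T.exists_argmax {a, b} ⟨u, by
    intro w hw
    simp only [Set.mem_insert_iff, Set.mem_singleton_iff] at hw
    rcases hw with rfl | rfl
    · exact h1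
    · exact h2⟩
  have hd3 : T.isDuke 3 d := T.keyduke {a, b} (by
    intro w hw
    simp only [Set.mem_insert_iff, Set.mem_singleton_iff] at hw
    rcases hw with rfl | rfl
    · exact ha
    · exact hb) d hdA hmax
  exact H d hd3 (hdA a (by simp)) (hdA b (by simp))

/-- The key final lemma: given the triangle `a → s`, `s → p`, `p → a` of
3-dukes such that every 3-duke is one of them and no vertex pecks both `a`
and `s`, the vertex `a` is a 2-duke. -/
lemma two_of [Finite V] {a s p : V}
    (has : T.peck a s) (hsp : T.peck s p) (hpa : T.peck p a)
    (hs_ne : T.nonEclipsed s)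
    (HX : ∀ y, T.isDuke 3 y → y = a ∨ y = s ∨ y = p)
    (hT3 : ∀ u, ¬ (T.peck u a ∧ T.peck u s)) :
    T.isDuke 2 a := by
  intro c₀ hc₀
  by_contra hnp
  have np1 : ¬ T.peck a c₀ := fun h => hnp (T.path1 h one_le_two)
  have np2 : ∀ u, T.peck a u → ¬ T.peck u c₀ := fun u h1 h2 => hnp (T.path2 h1 h2 le_rfl)
  have hc₀a : T.peck c₀ a := (T.complete c₀ a hc₀).resolve_right np1
  obtain ⟨c, hcp, hcs, hcne⟩ := T.exists_hat c₀
  have hca : T.peck c a := hcs a hc₀a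
  have np2' : ∀ u, T.peck a u → ¬ T.peck u c := by
    intro u h1 h2
    have hu : T.part u ≠ T.part c₀ := by rw [← hcp]; exact T.inter u c h2
    rcases T.complete u c₀ hu with h | h
    · exact np2 u h1 h
    · exact T.asymm u c h2 (hcs u h)
  have hcs_part : T.part c = T.part s := by
    by_contra hne
    rcases T.complete c s hne with h | h
    · exact hT3 c ⟨hca, h⟩
    · exact np2' s has h
  have hsu : ∀ u, T.peck u c → T.peck s u := by
    intro u huc
    have hus : ¬ T.peck u s := by
      intro hus
      obtain ⟨d, hdA, hmax⟩ := T.exists_argmax {s, c} ⟨u, by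
        intro w hw
        simp only [Set.mem_insert_iff, Set.mem_singleton_iff] at hw
        rcases hw with rfl | rfl
        · exact hus
        · exact huc⟩
      have hd3 : T.isDuke 3 d := T.keyduke {s, c} (by
        intro w hw
        simp only [Set.mem_insert_iff, Set.mem_singleton_iff] at hw
        rcases hw with rfl | rfl
        · exact hs_ne
        · exact hcne) d hdA hmax
      have hds : T.peck d s := hdA s (by simp)
      have hdc : T.peck d c := hdA c (by simp)
      rcases HX d hd3 with h | h | h
      · rw [h] at hdc; exact T.asymm c a hca hdc
      · rw [h] at hds; exact T.peck_irrefl s hds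
      · rw [h] at hds; exact T.asymm s p hsp hds
    have hup : T.part u ≠ T.part s := by
      rw [← hcs_part]; exact T.inter u c huc
    exact (T.complete u s hup).resolve_left hus
  have hc3 : T.isDuke 3 c := by
    intro w hw
    rcases T.complete c w (fun h => hw h.symm) with h | h
    · exact T.path1 h (by norm_num)
    · exact T.path3 hca has (hsu w h)
  rcases HX c hc3 with h | h | h
  · rw [h] at hca; exact T.peck_irrefl a hca
  · rw [h] at hca; exact T.asymm a s has hca
  · rw [h] at hcs_part; exact T.inter s p hsp hcs_part.symm

end MTour

/-- In any multipartite tournament there exists either a 1-Duke, or three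
distinct 2-Dukes, or four distinct 3-Dukes. -/
theorem stmt11 {V ι : Type*} [Finite V] [Nonempty V] (T : MTour V ι) :
    (∃ d, T.isDuke 1 d) ∨
    (∃ d₁ d₂ d₃, d₁ ≠ d₂ ∧ d₁ ≠ d₃ ∧ d₂ ≠ d₃ ∧
      T.isDuke 2 d₁ ∧ T.isDuke 2 d₂ ∧ T.isDuke 2 d₃) ∨
    (∃ d₁ d₂ d₃ d₄, d₁ ≠ d₂ ∧ d₁ ≠ d₃ ∧ d₁ ≠ d₄ ∧ d₂ ≠ d₃ ∧ d₂ ≠ d₄ ∧ d₃ ≠ d₄ ∧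
      T.isDuke 3 d₁ ∧ T.isDuke 3 d₂ ∧ T.isDuke 3 d₃ ∧ T.isDuke 3 d₄) := by
  by_cases h1 : ∃ d, T.isDuke 1 d
  · exact Or.inl h1
  push_neg at h1
  have hin : ∀ v : V, ∃ u, T.peck u v := by
    intro v
    by_contra h
    push_neg at h
    refine h1 v (fun c hc => T.path1 ?_ le_rfl)
    exact (T.complete c v hc).resolve_left (h c)
  -- x₁ : global argmax
  obtain ⟨x₁, -, hmax₁⟩ := T.exists_argmax ∅ ⟨Classical.arbitrary V, by simp⟩
  have hx₁d : T.isDuke 3 x₁ := T.keyduke ∅ (by simp) x₁ (by simp) hmax₁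
  have hx₁ne : T.nonEclipsed x₁ := T.key_noneclipsed ∅ x₁ (by simp) hmax₁
  -- x₂
  obtain ⟨x₂, hA₂, hmax₂⟩ := T.exists_argmax {x₁} (by
    obtain ⟨u, hu⟩ := hin x₁; exact ⟨u, by simpa using hu⟩)
  have hx₁s : ∀ w ∈ ({x₁} : Set V), T.nonEclipsed w := by
    intro w hw; simp only [Set.mem_singleton_iff] at hw; subst hw; exact hx₁ne
  have hx₂d : T.isDuke 3 x₂ := T.keyduke {x₁} hx₁s x₂ hA₂ hmax₂
  have hx₂ne : T.nonEclipsed x₂ := T.key_noneclipsed {x₁} x₂ hA₂ hmax₂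
  have t21 : T.peck x₂ x₁ := hA₂ x₁ (by simp)
  -- x₃
  obtain ⟨x₃, hA₃, hmax₃⟩ := T.exists_argmax {x₂} (by
    obtain ⟨u, hu⟩ := hin x₂; exact ⟨u, by simpa using hu⟩)
  have hx₂s : ∀ w ∈ ({x₂} : Set V), T.nonEclipsed w := by
    intro w hw; simp only [Set.mem_singleton_iff] at hw; subst hw; exact hx₂ne
  have hx₃d : T.isDuke 3 x₃ := T.keyduke {x₂} hx₂s x₃ hA₃ hmax₃
  have hx₃ne : T.nonEclipsed x₃ := T.key_noneclipsed {x₂} x₃ hA₃ hmax₃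
  have t32 : T.peck x₃ x₂ := hA₃ x₂ (by simp)
  -- x₄
  obtain ⟨x₄, hA₄, hmax₄⟩ := T.exists_argmax {x₃} (by
    obtain ⟨u, hu⟩ := hin x₃; exact ⟨u, by simpa using hu⟩)
  have hx₃s : ∀ w ∈ ({x₃} : Set V), T.nonEclipsed w := by
    intro w hw; simp only [Set.mem_singleton_iff] at hw; subst hw; exact hx₃ne
  have hx₄d : T.isDuke 3 x₄ := T.keyduke {x₃} hx₃s x₄ hA₄ hmax₄
  have t43 : T.peck x₄ x₃ := hA₄ x₃ (by simp)
  -- distinctness among x₁ x₂ x₃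
  have ne21 : x₂ ≠ x₁ := T.ne_of_peck t21
  have ne32 : x₃ ≠ x₂ := T.ne_of_peck t32
  have ne31 : x₃ ≠ x₁ := fun h => T.asymm x₂ x₁ t21 (h ▸ t32)
  by_cases h41 : x₄ = x₁
  · -- triangle case
    have t13 : T.peck x₁ x₃ := h41 ▸ t43
    by_cases hy : ∀ y, T.isDuke 3 y → y = x₁ ∨ y = x₂ ∨ y = x₃
    · -- three 2-dukes
      have hT3₁ : ∀ u, ¬ (T.peck u x₁ ∧ T.peck u x₃) := by
        refine T.no_common hx₁ne hx₃ne ?_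
        intro d hd3 hda hdb
        rcases hy d hd3 with h | h | h
        · rw [h] at hda; exact T.peck_irrefl x₁ hda
        · rw [h] at hdb; exact T.asymm x₃ x₂ t32 hdb
        · rw [h] at hdb; exact T.peck_irrefl x₃ hdb
      have hT3₂ : ∀ u, ¬ (T.peck u x₂ ∧ T.peck u x₁) := by
        refine T.no_common hx₂ne hx₁ne ?_
        intro d hd3 hda hdb
        rcases hy d hd3 with h | h | h
        · rw [h] at hdb; exact T.peck_irrefl x₁ hdb
        · rw [h] at hda; exact T.peck_irrefl x₂ hda
        · rw [h] at hdb; exact T.asymm x₁ x₃ t13 hdb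
      have hT3₃ : ∀ u, ¬ (T.peck u x₃ ∧ T.peck u x₂) := by
        refine T.no_common hx₃ne hx₂ne ?_
        intro d hd3 hda hdb
        rcases hy d hd3 with h | h | h
        · rw [h] at hdb; exact T.asymm x₂ x₁ t21 hdb
        · rw [h] at hdb; exact T.peck_irrefl x₂ hdb
        · rw [h] at hda; exact T.peck_irrefl x₃ hda
      have duk1 : T.isDuke 2 x₁ := T.two_of t13 t32 t21 hx₃ne
        (fun y h => by rcases hy y h with h' | h' | h' <;> tauto) hT3₁
      have duk2 : T.isDuke 2 x₂ := T.two_of t21 t13 t32 hx₁ne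
        (fun y h => by rcases hy y h with h' | h' | h' <;> tauto) hT3₂
      have duk3 : T.isDuke 2 x₃ := T.two_of t32 t21 t13 hx₂ne
        (fun y h => by rcases hy y h with h' | h' | h' <;> tauto) hT3₃
      exact Or.inr (Or.inl ⟨x₁, x₂, x₃, ne21.symm, ne31.symm, ne32.symm, duk1, duk2, duk3⟩)
    · -- a fourth 3-duke exists
      push_neg at hy
      obtain ⟨y, hy3, hy1, hy2, hy3'⟩ := hy
      exact Or.inr (Or.inr ⟨x₁, x₂, x₃, y, ne21.symm, ne31.symm, Ne.symm hy1,
        ne32.symm, Ne.symm hy2, Ne.symm hy3', hx₁d, hx₂d, hx₃d, hy3⟩)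
  · -- x₄ is a fourth 3-duke
    have ne43 : x₄ ≠ x₃ := T.ne_of_peck t43
    have ne42 : x₄ ≠ x₂ := fun h => T.asymm x₃ x₂ t32 (h ▸ t43)
    exact Or.inr (Or.inr ⟨x₁, x₂, x₃, x₄, ne21.symm, ne31.symm, Ne.symm h41,
      ne32.symm, Ne.symm ne42, Ne.symm ne43, hx₁d, hx₂d, hx₃d, hx₄d⟩)
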